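/- arXiv:1512.05043 — 3 statements merged into one kernel-verified Lean document; each statement's English description precedes it below -/
import Mathlib

section
/- Suppose ℓ and ℓ⋆ are integers with 0 ≤ ℓ, ℓ⋆ ≤ q^d − 2, and Q, Q⋆ ∈ A[X] are polynomials of degree at most q^d − 2 such that Q(λ_℘) and Q⋆(λ_℘) are units of O_℘ and (λ_℘/C_𝔤(λ_℘))^ℓ · (Q(λ_℘)/Q(C_𝔤(λ_℘))) = (λ_℘/C_𝔤(λ_℘))^{ℓ⋆} · (Q⋆(λ_℘)/Q⋆(C_𝔤(λ_℘))). Then ℓ = ℓ⋆ and Q⋆ = υ·Q for some υ ∈ 𝔽_q^×. -/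
open Polynomial
set_option linter.unusedSectionVars false

section Carlitz

variable {Fq : Type} [Field Fq] [Fintype Fq]
  {Carlitz : Polynomial Fq → Polynomial (Polynomial Fq)}
  (hC1 : Carlitz 1 = Polynomial.X)
  (hCadd : ∀ a b, Carlitz (a + b) = Carlitz a + Carlitz b)
  (hCsmul : ∀ (β : Fq) (a : Polynomial Fq),
      Carlitz (Polynomial.C β * a) = Polynomial.C (Polynomial.C β) * Carlitz a)
  (hCmul : ∀ a b, Carlitz (a * b) = (Carlitz a).comp (Carlitz b))
  (hCT : Carlitz Polynomial.X
      = Polynomial.C Polynomial.X * Polynomial.X + Polynomial.X ^ Fintype.card Fq)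
  (hCdvd : ∀ a, Polynomial.X ∣ Carlitz a)

include hCadd

lemma Carlitz_zero : Carlitz 0 = 0 := by
  have h := hCadd 0 0
  rw [add_zero] at h
  exact (left_eq_add.mp h)

lemma Carlitz_neg (a : Polynomial Fq) : Carlitz (-a) = - Carlitz a := by
  have h := hCadd a (-a)
  rw [add_neg_cancel, Carlitz_zero (hCadd := hCadd)] at h
  linear_combination -h

lemma Carlitz_sub (a b : Polynomial Fq) : Carlitz (a - b) = Carlitz a - Carlitz b := by
  rw [sub_eq_add_neg, hCadd, Carlitz_neg (hCadd := hCadd), sub_eq_add_neg]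

include hCdvd

lemma Carlitz_coeff_zero (a : Polynomial Fq) : (Carlitz a).coeff 0 = 0 := by
  obtain ⟨t, ht⟩ := hCdvd a
  rw [ht, mul_coeff_zero, coeff_X_zero, zero_mul]

include hCmul hCT

lemma Carlitz_X_mul (a : Polynomial Fq) :
    Carlitz (Polynomial.X * a)
      = Polynomial.C Polynomial.X * Carlitz a + (Carlitz a) ^ Fintype.card Fq := by
  rw [hCmul, hCT]
  simp [add_comp, mul_comp, pow_comp]

include hC1

lemma Carlitz_Xpow (m : ℕ) :
    (Carlitz (Polynomial.X ^ m)).Monic ∧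
      (Carlitz (Polynomial.X ^ m)).natDegree = Fintype.card Fq ^ m ∧
      (Carlitz (Polynomial.X ^ m)).coeff 1 = Polynomial.X ^ m := by
  have hq : 2 ≤ Fintype.card Fq := Fintype.one_lt_card
  induction m with
  | zero => simp [hC1]
  | succ m ih =>
    obtain ⟨hmon, hdeg, hc1⟩ := ih
    set f := Carlitz (Polynomial.X ^ m) with hf
    have hstep : Carlitz (Polynomial.X ^ (m + 1))
        = Polynomial.C Polynomial.X * f + f ^ Fintype.card Fq := by
      rw [pow_succ, mul_comm, Carlitz_X_mul (hCadd := hCadd) (hCmul := hCmul) (hCT := hCT) (hCdvd := hCdvd)]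
    have hfq : (f ^ Fintype.card Fq).Monic := hmon.pow _
    have hfqdeg : (f ^ Fintype.card Fq).natDegree = Fintype.card Fq ^ (m + 1) := by
      rw [hmon.natDegree_pow, hdeg, pow_succ, mul_comm]
    have hfdegpos : 1 ≤ f.natDegree := by
      rw [hdeg]; exact Nat.one_le_iff_ne_zero.mpr (pow_ne_zero _ (by omega))
    have hlt : (Polynomial.C Polynomial.X * f).natDegree < (f ^ Fintype.card Fq).natDegree := by
      rw [hfqdeg]
      calc (Polynomial.C Polynomial.X * f).natDegree ≤ f.natDegree := natDegree_C_mul_le _ _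
        _ = Fintype.card Fq ^ m := hdeg
        _ < Fintype.card Fq ^ (m + 1) := by
            exact Nat.pow_lt_pow_right (by omega) (Nat.lt_succ_self m)
    have hdlt : (Polynomial.C Polynomial.X * f).degree < (f ^ Fintype.card Fq).degree :=
      degree_lt_degree hlt
    refine ⟨?_, ?_, ?_⟩
    · rw [hstep]; exact hfq.add_of_right hdlt
    · rw [hstep, natDegree_add_eq_right_of_natDegree_lt hlt, hfqdeg]
    · rw [hstep]
      have h2 : (f ^ Fintype.card Fq).coeff 1 = 0 := by
        obtain ⟨t, ht⟩ := hCdvd (Polynomial.X ^ m)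
        rw [← hf] at ht
        have : f ^ Fintype.card Fq
            = (t ^ Fintype.card Fq * Polynomial.X ^ (Fintype.card Fq - 2)) * Polynomial.X ^ 2 := by
          rw [ht, mul_pow, mul_assoc, ← pow_add, mul_comm (Polynomial.X ^ _)]
          congr 2
          omega
        rw [this, coeff_mul_X_pow']
        simp
      rw [coeff_add, h2, add_zero, coeff_C_mul, hc1, ← pow_succ']

include hCsmul

lemma Carlitz_monomial (n : ℕ) (β : Fq) :
    Carlitz (Polynomial.monomial n β) = Polynomial.C (Polynomial.C β) * Carlitz (Polynomial.X ^ n) := by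
  rw [← C_mul_X_pow_eq_monomial, hCsmul]

lemma Carlitz_coeff_one (a : Polynomial Fq) : (Carlitz a).coeff 1 = a := by
  induction a using Polynomial.induction_on' with
  | add p q hp hq => rw [hCadd, coeff_add, hp, hq]
  | monomial n β =>
      rw [Carlitz_monomial (hC1 := hC1) (hCadd := hCadd) (hCsmul := hCsmul) (hCmul := hCmul)
          (hCT := hCT) (hCdvd := hCdvd), coeff_C_mul,
        (Carlitz_Xpow (hC1 := hC1) (hCadd := hCadd) (hCmul := hCmul)
          (hCT := hCT) (hCdvd := hCdvd) n).2.2, C_mul_X_pow_eq_monomial]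

lemma Carlitz_deg : ∀ n : ℕ, ∀ a : Polynomial Fq, a ≠ 0 → a.natDegree = n →
    (Carlitz a).natDegree = Fintype.card Fq ^ n ∧
      (Carlitz a).leadingCoeff = Polynomial.C a.leadingCoeff := by
  have hq : 2 ≤ Fintype.card Fq := Fintype.one_lt_card
  intro n
  induction n using Nat.strong_induction_on with
  | _ n ih =>
    intro a ha hdeg
    have hsplit : a.eraseLead + Polynomial.monomial a.natDegree a.leadingCoeff = a :=
      eraseLead_add_monomial_natDegree_leadingCoeff a
    obtain ⟨hXm, hXd, -⟩ := Carlitz_Xpow (hC1 := hC1) (hCadd := hCadd) (hCmul := hCmul)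
      (hCT := hCT) (hCdvd := hCdvd) a.natDegree
    have hlead0 : a.leadingCoeff ≠ 0 := leadingCoeff_ne_zero.mpr ha
    have hCle : (Polynomial.C a.leadingCoeff : Polynomial Fq) ≠ 0 := by
      simpa using hlead0
    have hmonD : (Polynomial.C (Polynomial.C a.leadingCoeff)
        * Carlitz (Polynomial.X ^ a.natDegree)).natDegree = Fintype.card Fq ^ n := by
      rw [natDegree_C_mul hCle, hXd, hdeg]
    have hmonL : (Polynomial.C (Polynomial.C a.leadingCoeff)
        * Carlitz (Polynomial.X ^ a.natDegree)).leadingCoeff = Polynomial.C a.leadingCoeff := by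
      rw [leadingCoeff_mul, leadingCoeff_C, hXm.leadingCoeff, mul_one]
    by_cases hr0 : a.eraseLead = 0
    · rw [hr0, zero_add] at hsplit
      constructor
      · conv_lhs => rw [← hsplit]
        rw [Carlitz_monomial (hC1 := hC1) (hCadd := hCadd) (hCsmul := hCsmul) (hCmul := hCmul)
            (hCT := hCT) (hCdvd := hCdvd)]
        exact hmonD
      · conv_lhs => rw [← hsplit]
        rw [Carlitz_monomial (hC1 := hC1) (hCadd := hCadd) (hCsmul := hCsmul) (hCmul := hCmul)
            (hCT := hCT) (hCdvd := hCdvd)]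
        exact hmonL
    · have hrd : a.eraseLead.natDegree < a.natDegree :=
        (a.eraseLead_natDegree_lt_or_eraseLead_eq_zero).resolve_right hr0
      obtain ⟨ihd, ihl⟩ := ih a.eraseLead.natDegree (hdeg ▸ hrd) a.eraseLead hr0 rfl
      have hdecomp : Carlitz a = Carlitz a.eraseLead
          + Polynomial.C (Polynomial.C a.leadingCoeff) * Carlitz (Polynomial.X ^ a.natDegree) := by
        conv_lhs => rw [← hsplit]
        rw [hCadd, Carlitz_monomial (hC1 := hC1) (hCadd := hCadd) (hCsmul := hCsmul)
            (hCmul := hCmul) (hCT := hCT) (hCdvd := hCdvd)]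
      have hltn : (Carlitz a.eraseLead).natDegree
          < (Polynomial.C (Polynomial.C a.leadingCoeff)
              * Carlitz (Polynomial.X ^ a.natDegree)).natDegree := by
        rw [hmonD, ihd]
        exact Nat.pow_lt_pow_right (by omega) (hdeg ▸ hrd)
      have hltd := degree_lt_degree hltn
      constructor
      · rw [hdecomp, natDegree_add_eq_right_of_natDegree_lt hltn, hmonD]
      · rw [hdecomp, leadingCoeff_add_of_degree_lt hltd, hmonL]

lemma Carlitz_deriv_Xpow (m : ℕ) :
    Polynomial.derivative (Carlitz (Polynomial.X ^ m)) = Polynomial.C (Polynomial.X ^ m) := by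
  have hq0 : ((Fintype.card Fq : ℕ) : Polynomial Fq) = 0 := by
    rw [← map_natCast (Polynomial.C : Fq →+* _), FiniteField.cast_card_eq_zero, map_zero]
  induction m with
  | zero => simp [hC1]
  | succ m ih =>
    rw [pow_succ, mul_comm, Carlitz_X_mul (hCadd := hCadd) (hCmul := hCmul) (hCT := hCT)
        (hCdvd := hCdvd), derivative_add, derivative_C_mul, ih, derivative_pow]
    simp [hq0, ← Polynomial.C_mul, pow_succ']

lemma Carlitz_derivative (a : Polynomial Fq) :
    Polynomial.derivative (Carlitz a) = Polynomial.C a := by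
  induction a using Polynomial.induction_on' with
  | add p q hp hq => rw [hCadd, derivative_add, hp, hq, Polynomial.C_add]
  | monomial n β =>
      rw [Carlitz_monomial (hC1 := hC1) (hCadd := hCadd) (hCsmul := hCsmul) (hCmul := hCmul)
          (hCT := hCT) (hCdvd := hCdvd), derivative_C_mul,
        Carlitz_deriv_Xpow (hC1 := hC1) (hCadd := hCadd) (hCsmul := hCsmul) (hCmul := hCmul)
          (hCT := hCT) (hCdvd := hCdvd), ← Polynomial.C_mul, C_mul_X_pow_eq_monomial]

end Carlitz


lemma key_ratfunc {Fq : Type} [Field Fq] (n e : ℕ) (hn : 0 < n) (he : e < n)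
    (p : Polynomial Fq) (hpi : Irreducible p)
    (s : Polynomial Fq) (hs : IsUnit s) (β : Polynomial Fq) (hβ : IsUnit β)
    (c : RatFunc Fq)
    (heq : c ^ n * algebraMap (Polynomial Fq) (RatFunc Fq) β
         = algebraMap (Polynomial Fq) (RatFunc Fq) (s * p ^ e)) :
    e = 0 ∧ ∃ γ : Fq, γ ≠ 0 ∧ c = algebraMap (Polynomial Fq) (RatFunc Fq) (Polynomial.C γ) := by
  have inj := IsFractionRing.injective (Polynomial Fq) (RatFunc Fq)
  have hp0 : p ≠ 0 := hpi.ne_zero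
  have hmapne : ∀ x : Polynomial Fq, x ≠ 0 → algebraMap (Polynomial Fq) (RatFunc Fq) x ≠ 0 := by
    intro x hx h
    exact hx (inj (by simpa using h))
  have hde : c.denom ≠ 0 := c.denom_ne_zero
  have hnum : algebraMap (Polynomial Fq) (RatFunc Fq) c.num
      = c * algebraMap (Polynomial Fq) (RatFunc Fq) c.denom := by
    have h := RatFunc.num_div_denom c
    rw [div_eq_iff (hmapne _ hde)] at h
    exact h
  -- main polynomial identity
  have hpoly : c.num ^ n * β = s * p ^ e * c.denom ^ n := by
    apply inj
    rw [map_mul, map_mul, map_pow, map_pow, hnum, mul_pow, mul_assoc, mul_comm _ (algebraMap _ _ β),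
      ← mul_assoc, heq]
  have hcop : IsCoprime (c.denom ^ n) (c.num ^ n) := ((RatFunc.isCoprime_num_denom c).symm).pow
  have hdvd : c.denom ^ n ∣ c.num ^ n * β := ⟨s * p ^ e, by linear_combination hpoly⟩
  have hdeu : IsUnit c.denom := by
    have := hcop.dvd_of_dvd_mul_left hdvd
    exact isUnit_of_dvd_unit (dvd_pow_self c.denom hn.ne') (isUnit_of_dvd_unit this hβ)
  have hde1 : c.denom = 1 := (RatFunc.monic_denom c).eq_one_of_isUnit hdeu
  rw [hde1, one_pow, mul_one] at hpoly
  have hprime : Prime p := hpi.prime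
  have he0 : e = 0 := by
    by_contra he0
    have hpd : p ∣ c.num := by
      have h1 : p ∣ c.num ^ n * β := by
        rw [hpoly]
        exact Dvd.dvd.mul_left (dvd_pow_self p he0) s
      have h2 : p ∣ c.num ^ n := (hprime.dvd_mul.mp h1).resolve_right
        (fun h => hpi.not_isUnit (isUnit_of_dvd_unit h hβ))
      exact hprime.dvd_of_dvd_pow h2
    obtain ⟨m, hm⟩ := hpd
    have hdvd2 : p ^ e * p ∣ p ^ e * s := by
      have h1 : p ^ (e + 1) ∣ p ^ n := pow_dvd_pow p (by omega)
      have h2 : p ^ n ∣ c.num ^ n * β := by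
        rw [hm, mul_pow, mul_assoc]
        exact Dvd.intro _ rfl
      rw [hpoly] at h2
      calc p ^ e * p = p ^ (e + 1) := by ring
        _ ∣ p ^ n := h1
        _ ∣ s * p ^ e := h2
        _ = p ^ e * s := mul_comm _ _
    have := (mul_dvd_mul_iff_left (pow_ne_zero e hp0)).mp hdvd2
    exact hpi.not_isUnit (isUnit_of_dvd_unit this hs)
  subst he0
  rw [pow_zero, mul_one] at hpoly
  have hnu : IsUnit c.num :=
    isUnit_of_dvd_unit (dvd_pow_self c.num hn.ne')
      (isUnit_of_mul_isUnit_left (hpoly ▸ hs))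
  obtain ⟨γ, hγu, hγ⟩ := Polynomial.isUnit_iff.mp hnu
  refine ⟨rfl, γ, hγu.ne_zero, ?_⟩
  rw [hγ]
  conv_lhs => rw [← RatFunc.num_div_denom c]
  rw [hde1, map_one, div_one]


section Main

/-- `x` is a unit of the subalgebra `S`. -/
def IsUnitIn {R K : Type*} [CommSemiring R] [CommRing K] [Algebra R K]
    (S : Subalgebra R K) (x : K) : Prop :=
  x ∈ S ∧ ∃ y ∈ S, x * y = 1

set_option maxHeartbeats 1600000 in
set_option synthInstance.maxHeartbeats 1000000 in
theorem stmt_2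
    (Fq : Type) [Field Fq] [Fintype Fq]
    (L : Type) [Field L] [Algebra (Polynomial Fq) L] [Algebra (RatFunc Fq) L]
    [IsScalarTower (Polynomial Fq) (RatFunc Fq) L] [FiniteDimensional (RatFunc Fq) L]
    (Carlitz : Polynomial Fq → Polynomial (Polynomial Fq))
    (hC1 : Carlitz 1 = Polynomial.X)
    (hCadd : ∀ a b, Carlitz (a + b) = Carlitz a + Carlitz b)
    (hCsmul : ∀ (β : Fq) (a : Polynomial Fq),
      Carlitz (Polynomial.C β * a) = Polynomial.C (Polynomial.C β) * Carlitz a)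
    (hCmul : ∀ a b, Carlitz (a * b) = (Carlitz a).comp (Carlitz b))
    (hCT : Carlitz Polynomial.X
      = Polynomial.C Polynomial.X * Polynomial.X + Polynomial.X ^ Fintype.card Fq)
    (hCdvd : ∀ a, Polynomial.X ∣ Carlitz a)
    (p : Polynomial Fq) (hpm : p.Monic) (hpi : Irreducible p)
    (d : ℕ) (hpd : p.natDegree = d) (hd1 : 1 ≤ d)
    (Ψ : Polynomial (Polynomial Fq)) (hΨdef : Polynomial.X * Ψ = Carlitz p)
    (hΨirr : Irreducible (Ψ.map (algebraMap (Polynomial Fq) (RatFunc Fq))))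
    (lam : L) (hlam : Polynomial.aeval lam Ψ = 0)
    (hgen : IntermediateField.adjoin (RatFunc Fq) {lam} = ⊤)
    (g : Polynomial Fq)
    (hg : ∀ u : (Polynomial Fq ⧸ Ideal.span {p})ˣ, ∃ n : ℕ,
      Ideal.Quotient.mk (Ideal.span {p}) g ^ n = (u : Polynomial Fq ⧸ Ideal.span {p}))
    (hqd : 2 < Fintype.card Fq ∨ 1 < d)
    (ℓ ℓs : ℕ) (hℓ : ℓ ≤ Fintype.card Fq ^ d - 2) (hℓs : ℓs ≤ Fintype.card Fq ^ d - 2)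
    (Q Qs : Polynomial (Polynomial Fq))
    (hQdeg : Q.natDegree ≤ Fintype.card Fq ^ d - 2) (hQsdeg : Qs.natDegree ≤ Fintype.card Fq ^ d - 2)
    (hQu : IsUnitIn (Algebra.adjoin (Polynomial Fq) {lam}) (Polynomial.aeval lam Q))
    (hQsu : IsUnitIn (Algebra.adjoin (Polynomial Fq) {lam}) (Polynomial.aeval lam Qs))
    (heq : (lam / Polynomial.aeval lam (Carlitz g)) ^ ℓ *
        (Polynomial.aeval lam Q / Polynomial.aeval (Polynomial.aeval lam (Carlitz g)) Q)
      = (lam / Polynomial.aeval lam (Carlitz g)) ^ ℓs *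
        (Polynomial.aeval lam Qs / Polynomial.aeval (Polynomial.aeval lam (Carlitz g)) Qs)) :
    ℓ = ℓs ∧ ∃ υ : Fq, υ ≠ 0 ∧ Qs = Polynomial.C (Polynomial.C υ) * Q := by
  classical
  have hq2 : 2 ≤ Fintype.card Fq := Fintype.one_lt_card
  have hqd3 : 3 ≤ Fintype.card Fq ^ d := by
    rcases hqd with h | h
    · calc 3 ≤ Fintype.card Fq := h
        _ = Fintype.card Fq ^ 1 := (pow_one _).symm
        _ ≤ Fintype.card Fq ^ d := Nat.pow_le_pow_right (by omega) hd1
    · calc 3 ≤ 2 ^ 2 := by norm_num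
        _ ≤ Fintype.card Fq ^ 2 := Nat.pow_le_pow_left hq2 2
        _ ≤ Fintype.card Fq ^ d := Nat.pow_le_pow_right (by omega) h
  set n : ℕ := Fintype.card Fq ^ d - 1 with hn
  have hn2 : 2 ≤ n := by omega
  have hqd1 : Fintype.card Fq ^ (d - 1) < n := by
    rcases Nat.lt_or_ge 1 d with h2 | h2
    · have hd2 : 2 ≤ d := h2
      have ha : 2 ≤ Fintype.card Fq ^ (d - 1) :=
        le_trans hq2 (Nat.le_self_pow (by omega) _)
      have : Fintype.card Fq ^ d = Fintype.card Fq ^ (d - 1) * Fintype.card Fq := by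
        rw [← pow_succ]
        congr 1
        omega
      have h3 : Fintype.card Fq ^ (d - 1) * 2 ≤ Fintype.card Fq ^ d := by
        rw [this]
        exact Nat.mul_le_mul_left _ hq2
      omega
    · have hd : d = 1 := by omega
      have hq3 : 3 ≤ Fintype.card Fq := by
        rcases hqd with h | h
        · exact h
        · omega
      subst hd
      simpa using by omega
  -- Carlitz facts
  have Cdeg : ∀ a : Polynomial Fq, a ≠ 0 →
      (Carlitz a).natDegree = Fintype.card Fq ^ a.natDegree ∧
        (Carlitz a).leadingCoeff = Polynomial.C a.leadingCoeff :=
    fun a ha => Carlitz_deg (hC1 := hC1) (hCadd := hCadd) (hCsmul := hCsmul) (hCmul := hCmul)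
      (hCT := hCT) (hCdvd := hCdvd) a.natDegree a ha rfl
  have Cc1 : ∀ a : Polynomial Fq, (Carlitz a).coeff 1 = a :=
    Carlitz_coeff_one (hC1 := hC1) (hCadd := hCadd) (hCsmul := hCsmul) (hCmul := hCmul)
      (hCT := hCT) (hCdvd := hCdvd)
  have Cc0 : ∀ a : Polynomial Fq, (Carlitz a).coeff 0 = 0 :=
    Carlitz_coeff_zero (hCadd := hCadd) (hCdvd := hCdvd)
  have Cderiv : ∀ a : Polynomial Fq, Polynomial.derivative (Carlitz a) = Polynomial.C a :=
    Carlitz_derivative (hC1 := hC1) (hCadd := hCadd) (hCsmul := hCsmul) (hCmul := hCmul)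
      (hCT := hCT) (hCdvd := hCdvd)
  have Csub : ∀ a b : Polynomial Fq, Carlitz (a - b) = Carlitz a - Carlitz b :=
    Carlitz_sub (hCadd := hCadd)
  have hp0 : p ≠ 0 := hpi.ne_zero
  -- injectivity of the algebra maps
  have injAk : Function.Injective (algebraMap (Polynomial Fq) (RatFunc Fq)) :=
    IsFractionRing.injective _ _
  have injkL : Function.Injective (algebraMap (RatFunc Fq) L) := (algebraMap (RatFunc Fq) L).injective
  have injAL : Function.Injective (algebraMap (Polynomial Fq) L) := by
    rw [IsScalarTower.algebraMap_eq (Polynomial Fq) (RatFunc Fq) L]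
    exact injkL.comp injAk
  -- the cyclotomic polynomial Ψ
  have hCpmonic : (Carlitz p).Monic := by
    have := (Cdeg p hp0).2
    rw [Monic, this, hpm.leadingCoeff, Polynomial.C_1]
  have hCpne : Carlitz p ≠ 0 := hCpmonic.ne_zero
  have hΨne : Ψ ≠ 0 := by
    intro h
    rw [h, mul_zero] at hΨdef
    exact hCpne hΨdef.symm
  have hCpdeg : (Carlitz p).natDegree = Fintype.card Fq ^ d := by
    rw [(Cdeg p hp0).1, hpd]
  have hΨmonic : Ψ.Monic := by
    have h1 : (Polynomial.X * Ψ).leadingCoeff = Ψ.leadingCoeff := by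
      rw [leadingCoeff_mul, leadingCoeff_X, one_mul]
    rw [Monic, ← h1, hΨdef]
    exact hCpmonic
  have hΨdeg : Ψ.natDegree = n := by
    have h1 : (Polynomial.X * Ψ).natDegree = 1 + Ψ.natDegree := by
      rw [natDegree_mul X_ne_zero hΨne, natDegree_X]
    rw [hΨdef, hCpdeg] at h1
    omega
  have hΨc0 : Ψ.coeff 0 = p := by
    have h1 : (Polynomial.X * Ψ).coeff 1 = Ψ.coeff 0 := coeff_X_mul Ψ 0
    rw [hΨdef, Cc1] at h1
    exact h1.symm
  -- the minimal polynomial of lam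
  have hΨ'mon : (Ψ.map (algebraMap (Polynomial Fq) (RatFunc Fq))).Monic := hΨmonic.map _
  have hΨ'deg : (Ψ.map (algebraMap (Polynomial Fq) (RatFunc Fq))).natDegree = n := by
    rw [natDegree_map_eq_of_injective injAk, hΨdeg]
  have hroot' : Polynomial.aeval lam (Ψ.map (algebraMap (Polynomial Fq) (RatFunc Fq))) = 0 := by
    rw [aeval_map_algebraMap]
    exact hlam
  have hminpoly : minpoly (RatFunc Fq) lam = Ψ.map (algebraMap (Polynomial Fq) (RatFunc Fq)) :=
    (minpoly.eq_of_irreducible_of_monic hΨirr hroot' hΨ'mon).symm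
  have hint : IsIntegral (RatFunc Fq) lam :=
    ⟨Ψ.map (algebraMap (Polynomial Fq) (RatFunc Fq)), hΨ'mon, by
      rw [← Polynomial.aeval_def]; exact hroot'⟩
  have hlamA : IsIntegral (Polynomial Fq) lam :=
    ⟨Ψ, hΨmonic, by rw [← Polynomial.aeval_def]; exact hlam⟩
  -- lam ≠ 0
  have hlam0 : lam ≠ 0 := by
    intro h
    rw [h, Polynomial.aeval_def, Polynomial.eval₂_at_zero, hΨc0] at hlam
    exact hp0 (injAL (by rw [hlam, map_zero]))
  -- power basis
  let etop : (IntermediateField.adjoin (RatFunc Fq) ({lam} : Set L)) ≃ₐ[RatFunc Fq] L :=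
    (IntermediateField.equivOfEq hgen).trans IntermediateField.topEquiv
  let pb : PowerBasis (RatFunc Fq) L := (IntermediateField.adjoin.powerBasis hint).map etop
  have hpbgen : pb.gen = lam := by
    simp only [pb, PowerBasis.map_gen, IntermediateField.adjoin.powerBasis_gen, etop]
    rfl
  have hpbdim : pb.dim = n := by
    have h1 : pb.dim = (minpoly (RatFunc Fq) lam).natDegree := by
      simp only [pb, PowerBasis.map_dim, IntermediateField.adjoin.powerBasis_dim]
    rw [h1, hminpoly, hΨ'deg]
  have hfinrank : Module.finrank (RatFunc Fq) L = n := by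
    have h1 : Module.finrank (RatFunc Fq) L = (minpoly (RatFunc Fq) lam).natDegree := by
      rw [← IntermediateField.adjoin.finrank hint]
      exact (LinearEquiv.finrank_eq etop.toLinearEquiv).symm
    rw [h1, hminpoly, hΨ'deg]
  -- roots of Carlitz polynomials at lam
  have haroot : ∀ a : Polynomial Fq, p ∣ a → Polynomial.aeval lam (Carlitz a) = 0 := by
    intro a ⟨b, hb⟩
    have h1 : a = b * p := by rw [hb]; ring
    rw [h1, hCmul, Polynomial.aeval_comp]
    have h2 : Polynomial.aeval lam (Carlitz p) = 0 := by
      rw [← hΨdef, map_mul, Polynomial.aeval_X, hlam, mul_zero]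
    rw [h2, Polynomial.aeval_def, Polynomial.eval₂_at_zero, Cc0, map_zero]
  have ha0 : ∀ a : Polynomial Fq, Polynomial.aeval lam (Carlitz a) = 0 → p ∣ a := by
    intro a ha
    set r := a %ₘ p with hr
    have hdow : p * (a /ₘ p) + r = a := by
      rw [hr, add_comm]
      exact Polynomial.modByMonic_add_div a p
    by_cases hr0 : r = 0
    · rw [← Polynomial.modByMonic_eq_zero_iff_dvd hpm]
      exact hr ▸ hr0
    · exfalso
      have hra : Polynomial.aeval lam (Carlitz r) = 0 := by
        have h1 : Carlitz a = Carlitz (p * (a /ₘ p)) + Carlitz r := by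
          rw [← hCadd, hdow]
        have h2 : Polynomial.aeval lam (Carlitz (p * (a /ₘ p))) = 0 :=
          haroot _ ⟨_, rfl⟩
        have := congrArg (Polynomial.aeval lam) h1
        rw [ha, map_add, h2, zero_add] at this
        exact this.symm
      -- degree bound contradiction
      have hCr0 : Carlitz r ≠ 0 := by
        intro h
        have := (Cdeg r hr0).2
        rw [h, leadingCoeff_zero] at this
        exact leadingCoeff_ne_zero.mpr hr0 (by
          have := this.symm
          rwa [Polynomial.C_eq_zero] at this)
      have hmapne : (Carlitz r).map (algebraMap (Polynomial Fq) (RatFunc Fq)) ≠ 0 := by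
        rw [Ne, Polynomial.map_eq_zero_iff injAk]
        exact hCr0
      have hdvd : minpoly (RatFunc Fq) lam ∣
          (Carlitz r).map (algebraMap (Polynomial Fq) (RatFunc Fq)) := by
        apply minpoly.dvd
        rw [aeval_map_algebraMap]
        exact hra
      have hle : n ≤ ((Carlitz r).map (algebraMap (Polynomial Fq) (RatFunc Fq))).natDegree := by
        have := Polynomial.natDegree_le_of_dvd hdvd hmapne
        rwa [hminpoly, hΨ'deg] at this
      rw [natDegree_map_eq_of_injective injAk, (Cdeg r hr0).1] at hle
      have hrdeg : r.natDegree < d := by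
        have h1 : r.degree < p.degree := Polynomial.degree_modByMonic_lt a hpm
        have h2 : r.natDegree < p.natDegree := by
          apply Polynomial.natDegree_lt_natDegree hr0 h1
        omega
      have : Fintype.card Fq ^ r.natDegree ≤ Fintype.card Fq ^ (d - 1) :=
        Nat.pow_le_pow_right (by omega) (by omega)
      omega
  -- the quotient field
  haveI hmax : (Ideal.span ({p} : Set (Polynomial Fq))).IsMaximal :=
    PrincipalIdealRing.isMaximal_of_irreducible hpi
  letI : Field (Polynomial Fq ⧸ Ideal.span ({p} : Set (Polynomial Fq))) :=
    Ideal.Quotient.field _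
  letI : Fintype (Polynomial Fq ⧸ Ideal.span ({p} : Set (Polynomial Fq))) :=
    (Module.fintypeOfFintype (AdjoinRoot.powerBasis (f := p) hp0).basis : Fintype (AdjoinRoot p))
  have hfrq : Module.finrank Fq (Polynomial Fq ⧸ Ideal.span ({p} : Set (Polynomial Fq)))
      = p.natDegree := (AdjoinRoot.powerBasis (f := p) hp0).finrank
  have hcardq : Fintype.card (Polynomial Fq ⧸ Ideal.span ({p} : Set (Polynomial Fq)))
      = Fintype.card Fq ^ d := by
    rw [Module.card_eq_pow_finrank (K := Fq), hfrq, hpd]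
  have hcardu : Fintype.card (Polynomial Fq ⧸ Ideal.span ({p} : Set (Polynomial Fq)))ˣ = n := by
    rw [Fintype.card_units, hcardq]
  -- g is not divisible by p
  have hgnd : ¬ p ∣ g := by
    intro hdvd
    have hg0 : Ideal.Quotient.mk (Ideal.span ({p} : Set (Polynomial Fq))) g = 0 :=
      (Ideal.Quotient.eq_zero_iff_dvd p g).mpr hdvd
    have h2 : 2 ≤ Fintype.card (Polynomial Fq ⧸ Ideal.span ({p} : Set (Polynomial Fq)))ˣ := by
      omega
    obtain ⟨v, hv⟩ := Fintype.exists_ne_of_one_lt_card (by omega)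
      (1 : (Polynomial Fq ⧸ Ideal.span ({p} : Set (Polynomial Fq)))ˣ)
    obtain ⟨m, hm⟩ := hg v
    rcases Nat.eq_zero_or_pos m with hm0 | hm0
    · rw [hm0, pow_zero] at hm
      exact hv (Units.ext hm.symm)
    · rw [hg0, zero_pow (by omega)] at hm
      exact v.ne_zero hm.symm
  have hg0' : Ideal.Quotient.mk (Ideal.span ({p} : Set (Polynomial Fq))) g ≠ 0 := by
    rw [Ne, Ideal.Quotient.eq_zero_iff_dvd]
    exact hgnd
  set u : (Polynomial Fq ⧸ Ideal.span ({p} : Set (Polynomial Fq)))ˣ :=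
    (isUnit_iff_ne_zero.mpr hg0').unit with hu
  have huval : (u : Polynomial Fq ⧸ Ideal.span ({p} : Set (Polynomial Fq)))
      = Ideal.Quotient.mk (Ideal.span ({p} : Set (Polynomial Fq))) g := rfl
  have horderu : orderOf u = n := by
    have h1 : ∀ x, x ∈ Subgroup.zpowers u := by
      intro x
      obtain ⟨m, hm⟩ := hg x
      rw [Subgroup.mem_zpowers_iff]
      exact ⟨(m : ℤ), by
        rw [zpow_natCast]
        apply Units.ext
        rw [Units.val_pow_eq_pow_val, huval, hm]⟩
    rw [orderOf_eq_card_of_forall_mem_zpowers h1, Nat.card_eq_fintype_card, hcardu]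
  -- the element μ
  set μ : L := Polynomial.aeval lam (Carlitz g) with hμdef
  have hμ0 : μ ≠ 0 := by
    intro h
    exact hgnd (ha0 g h)
  have hμΨ : Polynomial.aeval μ Ψ = 0 := by
    have h1 : Polynomial.aeval μ (Carlitz p) = 0 := by
      rw [hμdef, ← Polynomial.aeval_comp, ← hCmul]
      exact haroot _ (Dvd.intro _ rfl)
    rw [← hΨdef, map_mul, Polynomial.aeval_X] at h1
    exact (mul_eq_zero.mp h1).resolve_left hμ0
  -- the automorphism σ
  have hrootμ : Polynomial.aeval μ (minpoly (RatFunc Fq) pb.gen) = 0 := by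
    rw [hpbgen, hminpoly, aeval_map_algebraMap]
    exact hμΨ
  set σ0 : L →ₐ[RatFunc Fq] L := pb.lift μ hrootμ with hσ0
  have hσ0lam : σ0 lam = μ := by
    conv_lhs => rw [← hpbgen]
    exact pb.lift_gen μ hrootμ
  have hbij : Function.Bijective σ0 :=
    ⟨σ0.toRingHom.injective,
      LinearMap.surjective_of_injective (f := σ0.toLinearMap) σ0.toRingHom.injective⟩
  set σ : L ≃ₐ[RatFunc Fq] L := AlgEquiv.ofBijective σ0 hbij with hσ
  have hσlam : σ lam = μ := hσ0lam
  have hσaeval : ∀ (x : L) (f : Polynomial (Polynomial Fq)),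
      σ (Polynomial.aeval x f) = Polynomial.aeval (σ x) f := by
    intro x f
    exact (Polynomial.aeval_algHom_apply
      (AlgHom.restrictScalars (Polynomial Fq) (σ : L →ₐ[RatFunc Fq] L)) x f).symm
  have hσpow : ∀ m : ℕ, (σ ^ m) lam = Polynomial.aeval lam (Carlitz (g ^ m)) := by
    intro m
    induction m with
    | zero =>
        rw [pow_zero, pow_zero, hC1, Polynomial.aeval_X]
        rfl
    | succ m ih =>
        have h1 : (σ ^ (m + 1)) lam = σ ((σ ^ m) lam) := by
          rw [pow_succ' σ m]
          rfl
        rw [h1, ih, hσaeval, hσlam, hμdef, ← Polynomial.aeval_comp, ← hCmul, ← pow_succ]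
  -- order of σ
  have hσiff : ∀ m : ℕ, σ ^ m = 1 ↔ u ^ m = 1 := by
    intro m
    have h1 : σ ^ m = 1 ↔ (σ ^ m) lam = lam := by
      constructor
      · intro h
        rw [h]
        rfl
      · intro h
        have h2 : ((σ ^ m : L ≃ₐ[RatFunc Fq] L) : L →ₐ[RatFunc Fq] L)
            = ((1 : L ≃ₐ[RatFunc Fq] L) : L →ₐ[RatFunc Fq] L) := by
          apply pb.algHom_ext
          rw [hpbgen]
          exact h
        exact AlgEquiv.ext fun x => DFunLike.congr_fun h2 x
    have h2 : (σ ^ m) lam = lam ↔ Polynomial.aeval lam (Carlitz (g ^ m - 1)) = 0 := by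
      rw [hσpow m, Csub, hC1, map_sub, Polynomial.aeval_X, sub_eq_zero]
    have h3 : Polynomial.aeval lam (Carlitz (g ^ m - 1)) = 0 ↔ u ^ m = 1 := by
      constructor
      · intro h
        have hdvd := ha0 _ h
        have h4 : Ideal.Quotient.mk (Ideal.span ({p} : Set (Polynomial Fq))) (g ^ m - 1) = 0 :=
          (Ideal.Quotient.eq_zero_iff_dvd p _).mpr hdvd
        rw [map_sub, map_pow, map_one, sub_eq_zero] at h4
        apply Units.ext
        rw [Units.val_pow_eq_pow_val, huval, h4]
        rfl
      · intro h
        apply haroot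
        rw [← Ideal.Quotient.eq_zero_iff_dvd, map_sub, map_pow, map_one, sub_eq_zero]
        have := congrArg (Units.val) h
        rw [Units.val_pow_eq_pow_val, huval] at this
        rw [this]
        rfl
    rw [h1, h2, h3]
  have horderσ : orderOf σ = n := by
    rw [orderOf_eq_orderOf_iff.mpr (fun m => (hσiff m).trans (Iff.rfl)), horderu]
  -- fixed field is the base field
  letI : Fintype (L ≃ₐ[RatFunc Fq] L) := AlgEquiv.fintype (RatFunc Fq) L
  set H : Subgroup (L ≃ₐ[RatFunc Fq] L) := Subgroup.zpowers σ with hH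
  have hcardH : Fintype.card H = n := by
    rw [← Nat.card_eq_fintype_card, Nat.card_zpowers, horderσ]
  have hArtin : Module.finrank (IntermediateField.fixedField H) L = n := by
    rw [IntermediateField.finrank_fixedField_eq_card, Nat.card_eq_fintype_card, hcardH]
  have hFbot : IntermediateField.fixedField H = ⊥ := by
    rw [← IntermediateField.finrank_eq_one_iff]
    have htower := Module.finrank_mul_finrank (F := RatFunc Fq)
      (K := IntermediateField.fixedField H) (A := L)
    rw [hArtin, hfinrank] at htower
    have hone : Module.finrank (RatFunc Fq) (IntermediateField.fixedField H) * n = 1 * n := by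
      rw [one_mul, htower]
    exact Nat.eq_of_mul_eq_mul_right (by omega) hone
  -- σ-fixed elements are in the base field
  have hfixed : ∀ x : L, σ x = x → ∃ c : RatFunc Fq, algebraMap (RatFunc Fq) L c = x := by
    intro x hx
    have hpowfix : ∀ m : ℕ, (σ ^ m) x = x := by
      intro m
      induction m with
      | zero => rfl
      | succ m ih =>
          rw [pow_succ σ m, AlgEquiv.mul_apply, hx, ih]
    have hmem : x ∈ IntermediateField.fixedField H := by
      rintro ⟨τ, hτ⟩
      obtain ⟨j, hj⟩ := Subgroup.mem_zpowers_iff.mp hτ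
      show τ x = x
      rcases j with j | j
      · rw [← hj]
        show (σ ^ (j : ℤ)) x = x
        rw [zpow_natCast]
        exact hpowfix j
      · rw [← hj, zpow_negSucc]
        have h1 : (σ ^ (j + 1))⁻¹ ((σ ^ (j + 1)) x) = (σ ^ (j + 1))⁻¹ x :=
          congrArg _ (hpowfix (j + 1))
        rw [← AlgEquiv.mul_apply, inv_mul_cancel, AlgEquiv.one_apply] at h1
        exact h1.symm
    rw [hFbot] at hmem
    exact IntermediateField.mem_bot.mp hmem
  -- nonvanishing of the various quantities
  have hQl0 : Polynomial.aeval lam Q ≠ 0 := by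
    obtain ⟨-, y, -, hy⟩ := hQu
    exact left_ne_zero_of_mul_eq_one hy
  have hQsl0 : Polynomial.aeval lam Qs ≠ 0 := by
    obtain ⟨-, y, -, hy⟩ := hQsu
    exact left_ne_zero_of_mul_eq_one hy
  have hσQ : σ (Polynomial.aeval lam Q) = Polynomial.aeval μ Q := by
    rw [hσaeval, hσlam]
  have hσQs : σ (Polynomial.aeval lam Qs) = Polynomial.aeval μ Qs := by
    rw [hσaeval, hσlam]
  have hQμ0 : Polynomial.aeval μ Q ≠ 0 := by
    intro h
    exact hQl0 (σ.injective (by rw [hσQ, h, map_zero]))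
  have hQsμ0 : Polynomial.aeval μ Qs ≠ 0 := by
    intro h
    exact hQsl0 (σ.injective (by rw [hσQs, h, map_zero]))
  -- the fixed element
  set x1 : L := lam ^ ℓ * Polynomial.aeval lam Q with hx1def
  set y1 : L := lam ^ ℓs * Polynomial.aeval lam Qs with hy1def
  have hσx1 : σ x1 = μ ^ ℓ * Polynomial.aeval μ Q := by
    rw [hx1def, map_mul, map_pow, hσlam, hσQ]
  have hσy1 : σ y1 = μ ^ ℓs * Polynomial.aeval μ Qs := by
    rw [hy1def, map_mul, map_pow, hσlam, hσQs]
  have hx10 : x1 ≠ 0 := mul_ne_zero (pow_ne_zero _ hlam0) hQl0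
  have hy10 : y1 ≠ 0 := mul_ne_zero (pow_ne_zero _ hlam0) hQsl0
  have hσy10 : σ y1 ≠ 0 := by
    rw [hσy1]
    exact mul_ne_zero (pow_ne_zero _ hμ0) hQsμ0
  have hσx10 : σ x1 ≠ 0 := by
    rw [hσx1]
    exact mul_ne_zero (pow_ne_zero _ hμ0) hQμ0
  have hcross : x1 * σ y1 = y1 * σ x1 := by
    rw [div_pow, div_pow, div_mul_div_comm, div_mul_div_comm,
      div_eq_div_iff (by rw [← hσx1]; exact hσx10) (by rw [← hσy1]; exact hσy10)] at heq
    rw [hσx1, hσy1, hx1def, hy1def]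
    linear_combination heq
  obtain ⟨c, hc⟩ := hfixed (x1 / y1) (by
    rw [map_div₀, div_eq_div_iff hσy10 hy10]
    linear_combination -hcross)
  have hz0 : x1 / y1 ≠ 0 := div_ne_zero hx10 hy10
  have hc0 : c ≠ 0 := by
    intro h
    rw [h, map_zero] at hc
    exact hz0 hc.symm
  have hstar : x1 = algebraMap (RatFunc Fq) L c * y1 := by
    rw [hc, div_mul_cancel₀ _ hy10]
  -- separability of L over RatFunc Fq
  haveI hsepL : Algebra.IsSeparable (RatFunc Fq) L := by
    have hder : Polynomial.derivative Ψ ≠ 0 := by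
      intro h
      have h1 := congrArg Polynomial.derivative hΨdef
      rw [derivative_mul, derivative_X, one_mul, h, mul_zero, add_zero, Cderiv] at h1
      have h2 := congrArg Polynomial.natDegree h1
      rw [hΨdeg, natDegree_C] at h2
      omega
    have hsepelem : IsSeparable (RatFunc Fq) lam := by
      show (minpoly (RatFunc Fq) lam).Separable
      rw [hminpoly]
      apply (Polynomial.separable_iff_derivative_ne_zero hΨirr).mpr
      rw [derivative_map]
      intro h
      exact hder ((Polynomial.map_eq_zero_iff injAk).mp h)
    haveI h1 : Algebra.IsSeparable (RatFunc Fq)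
        (IntermediateField.adjoin (RatFunc Fq) ({lam} : Set L)) :=
      (IntermediateField.isSeparable_adjoin_simple_iff_isSeparable _ _).mpr hsepelem
    exact AlgEquiv.Algebra.isSeparable etop
  -- norms of integral elements land in the polynomial ring
  have hNormA : ∀ x : L, x ∈ Algebra.adjoin (Polynomial Fq) ({lam} : Set L) →
      ∃ y : Polynomial Fq,
        algebraMap (Polynomial Fq) (RatFunc Fq) y = Algebra.norm (RatFunc Fq) x := by
    intro x hx
    have hxint : IsIntegral (Polynomial Fq) x :=
      IsIntegral.of_mem_of_fg _ hlamA.fg_adjoin_singleton x hx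
    exact IsIntegrallyClosed.isIntegral_iff.mp (Algebra.isIntegral_norm (RatFunc Fq) hxint)
  obtain ⟨a₀, ha₀⟩ := hNormA _ hQu.1
  obtain ⟨b₀, hb₀⟩ := hNormA _ hQsu.1
  have ha₀u : IsUnit a₀ := by
    obtain ⟨-, y, hyadj, hy1⟩ := hQu
    obtain ⟨a₁, ha₁⟩ := hNormA y hyadj
    refine IsUnit.of_mul_eq_one a₁ (injAk ?_)
    rw [map_mul, ha₀, ha₁, ← map_mul, hy1, map_one, map_one]
  have hb₀u : IsUnit b₀ := by
    obtain ⟨-, y, hyadj, hy1⟩ := hQsu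
    obtain ⟨b₁, hb₁⟩ := hNormA y hyadj
    refine IsUnit.of_mul_eq_one b₁ (injAk ?_)
    rw [map_mul, hb₀, hb₁, ← map_mul, hy1, map_one, map_one]
  -- the norm of lam
  have hNlam : Algebra.norm (RatFunc Fq) lam
      = algebraMap (Polynomial Fq) (RatFunc Fq) ((-1) ^ n * p) := by
    have h1 := Algebra.PowerBasis.norm_gen_eq_coeff_zero_minpoly pb
    rw [hpbgen, hpbdim, hminpoly, coeff_map, hΨc0] at h1
    rw [h1, map_mul, map_pow, map_neg, map_one]
  set w : RatFunc Fq := algebraMap (Polynomial Fq) (RatFunc Fq) ((-1) ^ n * p) with hw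
  have hw0 : w ≠ 0 := by
    rw [hw, Ne, map_eq_zero_iff _ injAk]
    exact mul_ne_zero (pow_ne_zero _ (neg_ne_zero.mpr one_ne_zero)) hp0
  -- norms of the main identity
  have hNstar : w ^ ℓ * algebraMap (Polynomial Fq) (RatFunc Fq) a₀
      = c ^ n * (w ^ ℓs * algebraMap (Polynomial Fq) (RatFunc Fq) b₀) := by
    have hstar' : lam ^ ℓ * Polynomial.aeval lam Q
        = algebraMap (RatFunc Fq) L c * (lam ^ ℓs * Polynomial.aeval lam Qs) := by
      rw [hx1def, hy1def] at hstar
      exact hstar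
    have h1 := congrArg (fun t => Algebra.norm (RatFunc Fq) t) hstar'
    simp only [map_mul, map_pow] at h1
    rw [hNlam, Algebra.norm_algebraMap, hfinrank] at h1
    rw [hw, ha₀, hb₀]
    exact h1
  have hwE : ∀ (e : ℕ) (t : Polynomial Fq),
      w ^ e * algebraMap (Polynomial Fq) (RatFunc Fq) t
        = algebraMap (Polynomial Fq) (RatFunc Fq) ((((-1) ^ n) ^ e * t) * p ^ e) := by
    intro e t
    rw [hw, ← map_pow, ← map_mul]
    congr 1
    ring
  obtain ⟨hll, γ, hγ0, hcγ⟩ : ℓ = ℓs ∧ ∃ γ : Fq, γ ≠ 0 ∧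
      c = algebraMap (Polynomial Fq) (RatFunc Fq) (Polynomial.C γ) := by
    rcases le_or_gt ℓs ℓ with hcase | hcase
    · have hsplit : w ^ ℓ = w ^ ℓs * w ^ (ℓ - ℓs) := by
        rw [← pow_add]
        congr 1
        omega
      have hkey : c ^ n * algebraMap (Polynomial Fq) (RatFunc Fq) b₀
          = algebraMap (Polynomial Fq) (RatFunc Fq)
              ((((-1) ^ n) ^ (ℓ - ℓs) * a₀) * p ^ (ℓ - ℓs)) := by
        rw [← hwE]
        apply mul_left_cancel₀ (pow_ne_zero ℓs hw0)
        rw [hsplit] at hNstar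
        linear_combination -hNstar
      have hsu : IsUnit ((((-1) : Polynomial Fq) ^ n) ^ (ℓ - ℓs) * a₀) :=
        ((isUnit_one.neg.pow n).pow (ℓ - ℓs)).mul ha₀u
      obtain ⟨he0, γ, hγ0, hcγ⟩ :=
        key_ratfunc n (ℓ - ℓs) (by omega) (by omega) p hpi _ hsu b₀ hb₀u c hkey
      exact ⟨by omega, γ, hγ0, hcγ⟩
    · exfalso
      have hsplit : w ^ ℓs = w ^ ℓ * w ^ (ℓs - ℓ) := by
        rw [← pow_add]
        congr 1
        omega
      have hcn : c⁻¹ ^ n * c ^ n = 1 := by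
        rw [← mul_pow, inv_mul_cancel₀ hc0, one_pow]
      have hkey : c⁻¹ ^ n * algebraMap (Polynomial Fq) (RatFunc Fq) a₀
          = algebraMap (Polynomial Fq) (RatFunc Fq)
              ((((-1) ^ n) ^ (ℓs - ℓ) * b₀) * p ^ (ℓs - ℓ)) := by
        rw [← hwE]
        apply mul_left_cancel₀ (pow_ne_zero ℓ hw0)
        rw [hsplit] at hNstar
        linear_combination c⁻¹ ^ n * hNstar
          + (w ^ ℓ * w ^ (ℓs - ℓ) * algebraMap (Polynomial Fq) (RatFunc Fq) b₀) * hcn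
      have hsu : IsUnit ((((-1) : Polynomial Fq) ^ n) ^ (ℓs - ℓ) * b₀) :=
        ((isUnit_one.neg.pow n).pow (ℓs - ℓ)).mul hb₀u
      obtain ⟨he0, -⟩ :=
        key_ratfunc n (ℓs - ℓ) (by omega) (by omega) p hpi _ hsu a₀ ha₀u c⁻¹ hkey
      omega
  subst hll
  refine ⟨rfl, γ⁻¹, inv_ne_zero hγ0, ?_⟩
  -- from hstar, cancel the powers of lam
  have hQQs : Polynomial.aeval lam Q
      = algebraMap (Polynomial Fq) L (Polynomial.C γ) * Polynomial.aeval lam Qs := by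
    apply mul_left_cancel₀ (pow_ne_zero ℓ hlam0)
    rw [hx1def, hy1def] at hstar
    rw [hstar, hcγ, ← IsScalarTower.algebraMap_apply]
    ring
  -- the polynomial identity
  have hD : Q - Polynomial.C (Polynomial.C γ) * Qs = 0 := by
    by_contra hD0
    have hroot : Polynomial.aeval lam
        ((Q - Polynomial.C (Polynomial.C γ) * Qs).map
          (algebraMap (Polynomial Fq) (RatFunc Fq))) = 0 := by
      rw [aeval_map_algebraMap, map_sub, map_mul, aeval_C, hQQs]
      ring
    have hdvd := minpoly.dvd (RatFunc Fq) lam hroot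
    have hne : (Q - Polynomial.C (Polynomial.C γ) * Qs).map
        (algebraMap (Polynomial Fq) (RatFunc Fq)) ≠ 0 := by
      rw [Ne, Polynomial.map_eq_zero_iff injAk]
      exact hD0
    have hle := Polynomial.natDegree_le_of_dvd hdvd hne
    rw [hminpoly, hΨ'deg] at hle
    have hb1 : ((Q - Polynomial.C (Polynomial.C γ) * Qs).map
        (algebraMap (Polynomial Fq) (RatFunc Fq))).natDegree
        ≤ (Q - Polynomial.C (Polynomial.C γ) * Qs).natDegree :=
      Polynomial.natDegree_map_le
    have hb2 : (Q - Polynomial.C (Polynomial.C γ) * Qs).natDegree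
        ≤ max Q.natDegree (Polynomial.C (Polynomial.C γ) * Qs).natDegree :=
      Polynomial.natDegree_sub_le _ _
    have hb3 : (Polynomial.C (Polynomial.C γ) * Qs).natDegree ≤ Qs.natDegree :=
      Polynomial.natDegree_C_mul_le _ _
    omega
  have hQ : Q = Polynomial.C (Polynomial.C γ) * Qs := by
    have := sub_eq_zero.mp hD
    exact this
  rw [hQ, ← mul_assoc, ← Polynomial.C_mul, ← Polynomial.C_mul,
    inv_mul_cancel₀ hγ0, Polynomial.C_1, Polynomial.C_1, one_mul]

end Main
end

section
/- For every integer ℓ there exist an integer e with 0 ≤ e ≤ q^d − 2 and a polynomial Q ∈ A[X] such that Q(λ_℘) is a unit of O_℘ and (λ_℘/C_𝔤(λ_℘))^{ℓ} = (λ_℘/C_𝔤(λ_℘))^{e} · (Q(λ_℘)/Q(C_𝔤(λ_℘))). -/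
private lemma fermat_aux {Fq : Type} [Field Fq] [Fintype Fq]
    (p : Polynomial Fq) (hpm : p.Monic) (hpi : Irreducible p)
    (g : Polynomial Fq)
    (hg : ∀ u : (Polynomial Fq ⧸ Ideal.span {p})ˣ, ∃ n : ℕ,
      Ideal.Quotient.mk (Ideal.span {p}) g ^ n = (u : Polynomial Fq ⧸ Ideal.span {p}))
    (hcard3 : 3 ≤ Fintype.card Fq ^ p.natDegree) :
    (p ∣ g ^ (Fintype.card Fq ^ p.natDegree - 1) - 1) ∧
      (∀ i : ℕ, ∃ h : Polynomial Fq, p ∣ h * g ^ i - 1) := by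
  classical
  haveI hmax : (Ideal.span {p}).IsMaximal := PrincipalIdealRing.isMaximal_of_irreducible hpi
  letI : Field (Polynomial Fq ⧸ Ideal.span {p}) := Ideal.Quotient.field _
  let b : Module.Basis (Fin p.natDegree) Fq (AdjoinRoot p) := AdjoinRoot.powerBasisAux' hpm
  letI : Fintype (AdjoinRoot p) := Module.fintypeOfFintype b
  letI : Fintype (Polynomial Fq ⧸ Ideal.span {p}) := ‹Fintype (AdjoinRoot p)›
  have hcard : Fintype.card (Polynomial Fq ⧸ Ideal.span {p}) = Fintype.card Fq ^ p.natDegree := by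
    have h := Module.card_fintype b
    rw [Fintype.card_fin] at h
    exact h
  have hgne : Ideal.Quotient.mk (Ideal.span {p}) g ≠ 0 := by
    intro h0
    have h2 : ∃ x : Polynomial Fq ⧸ Ideal.span {p}, x ≠ 0 ∧ x ≠ 1 := by
      by_contra hcon
      push_neg at hcon
      have hinj : Function.Injective (fun x : Polynomial Fq ⧸ Ideal.span {p} =>
          (if x = 0 then (0 : Fin 2) else 1)) := by
        intro x y hxy
        by_cases hx : x = 0 <;> by_cases hy : y = 0 <;>
          simp [hx, hy] at hxy ⊢ <;>
          first
            | rfl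
            | (exact absurd rfl (by simp_all))
            | (rw [hcon x hx, hcon y hy])
      have := Fintype.card_le_of_injective _ hinj
      rw [hcard] at this
      simp at this
      omega
    obtain ⟨x, hx0, hx1⟩ := h2
    obtain ⟨n, hn⟩ := hg (isUnit_iff_ne_zero.mpr hx0).unit
    rw [IsUnit.unit_spec, h0] at hn
    rcases Nat.eq_zero_or_pos n with rfl | hn0
    · rw [pow_zero] at hn; exact hx1 hn.symm
    · rw [zero_pow (by omega)] at hn; exact hx0 hn.symm
  constructor
  · have := FiniteField.pow_card_sub_one_eq_one (Ideal.Quotient.mk (Ideal.span {p}) g) hgne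
    rw [hcard] at this
    have h0 : Ideal.Quotient.mk (Ideal.span {p}) (g ^ (Fintype.card Fq ^ p.natDegree - 1) - 1) = 0 := by
      rw [map_sub, map_pow, map_one, this, sub_self]
    rwa [Ideal.Quotient.eq_zero_iff_mem, Ideal.mem_span_singleton] at h0
  · intro i
    have hu : IsUnit (Ideal.Quotient.mk (Ideal.span {p}) g) := isUnit_iff_ne_zero.mpr hgne
    obtain ⟨h, hh⟩ := Ideal.Quotient.mk_surjective ((((hu.unit) ^ i)⁻¹ : (Polynomial Fq ⧸ Ideal.span {p})ˣ) : Polynomial Fq ⧸ Ideal.span {p})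
    refine ⟨h, ?_⟩
    have h0 : Ideal.Quotient.mk (Ideal.span {p}) (h * g ^ i - 1) = 0 := by
      rw [map_sub, map_mul, map_pow, map_one, hh]
      have : (Ideal.Quotient.mk (Ideal.span {p}) g) ^ i = ((hu.unit ^ i : (Polynomial Fq ⧸ Ideal.span {p})ˣ) : Polynomial Fq ⧸ Ideal.span {p}) := by
        rw [Units.val_pow_eq_pow_val, IsUnit.unit_spec]
      rw [this, ← Units.val_mul, inv_mul_cancel, Units.val_one, sub_self]
    rwa [Ideal.Quotient.eq_zero_iff_mem, Ideal.mem_span_singleton] at h0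

private lemma prod_tele {L : Type} [Field L] (B : ℕ → L) (lam β : L)
    (hB1 : B 1 = β) (hB : ∀ i, B i ≠ 0) (hlam : lam ≠ 0) (n : ℕ) :
    β^(n+1) * (∏ i ∈ Finset.range n, (lam / B (i+1)))
      = lam^n * B (n+1) * ∏ i ∈ Finset.range n, (β / B (i+2)) := by
  have hβ0 : β ≠ 0 := hB1 ▸ hB 1
  induction n with
  | zero => simp [hB1]
  | succ n ih =>
      rw [Finset.prod_range_succ, Finset.prod_range_succ]
      have h1 := hB (n+1)
      have h2 := hB (n+2)
      have c1 : lam / B (n+1) * B (n+1) = lam := div_mul_cancel₀ _ h1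
      have c2 : B (n+2) * (β / B (n+2)) = β := by field_simp
      linear_combination (β * (lam / B (n+1))) * ih
        + (β * lam^n * (∏ i ∈ Finset.range n, (β / B (i+2)))) * c1
        - (lam^(n+1) * (∏ i ∈ Finset.range n, (β / B (i+2)))) * c2

private lemma prod_tele' {L : Type} [Field L] (B : ℕ → L) (lam β : L)
    (hB1 : B 1 = β) (hB : ∀ i, B i ≠ 0) (hlam : lam ≠ 0) (n : ℕ) :
    lam^n * B (n+1) * (∏ i ∈ Finset.range n, (B (i+1) / lam))
      = β^(n+1) * ∏ i ∈ Finset.range n, (B (i+2) / β) := by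
  have hβ0 : β ≠ 0 := hB1 ▸ hB 1
  induction n with
  | zero => simp [hB1]
  | succ n ih =>
      rw [Finset.prod_range_succ, Finset.prod_range_succ]
      have c1 : B (n+1) / lam * lam = B (n+1) := div_mul_cancel₀ _ hlam
      have c2 : β * (B (n+2) / β) = B (n+2) := by field_simp
      linear_combination (B (n+2)) * ih
        + (lam^n * B (n+2) * (∏ i ∈ Finset.range n, (B (i+1) / lam))) * c1
        - (β^(n+1) * (∏ i ∈ Finset.range n, (B (i+2) / β))) * c2

theorem stmt_11
    (Fq : Type) [Field Fq] [Fintype Fq]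
    (L : Type) [Field L] [Algebra (Polynomial Fq) L] [Algebra (RatFunc Fq) L]
    [IsScalarTower (Polynomial Fq) (RatFunc Fq) L] [FiniteDimensional (RatFunc Fq) L]
    (Carlitz : Polynomial Fq → Polynomial (Polynomial Fq))
    (hC1 : Carlitz 1 = Polynomial.X)
    (hCadd : ∀ a b, Carlitz (a + b) = Carlitz a + Carlitz b)
    (hCsmul : ∀ (β : Fq) (a : Polynomial Fq),
      Carlitz (Polynomial.C β * a) = Polynomial.C (Polynomial.C β) * Carlitz a)
    (hCmul : ∀ a b, Carlitz (a * b) = (Carlitz a).comp (Carlitz b))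
    (hCT : Carlitz Polynomial.X
      = Polynomial.C Polynomial.X * Polynomial.X + Polynomial.X ^ Fintype.card Fq)
    (hCdvd : ∀ a, Polynomial.X ∣ Carlitz a)
    (p : Polynomial Fq) (hpm : p.Monic) (hpi : Irreducible p)
    (d : ℕ) (hpd : p.natDegree = d) (hd1 : 1 ≤ d)
    (Ψ : Polynomial (Polynomial Fq)) (hΨdef : Polynomial.X * Ψ = Carlitz p)
    (hΨirr : Irreducible (Ψ.map (algebraMap (Polynomial Fq) (RatFunc Fq))))
    (lam : L) (hlam : Polynomial.aeval lam Ψ = 0)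
    (hgen : IntermediateField.adjoin (RatFunc Fq) {lam} = ⊤)
    (g : Polynomial Fq)
    (hg : ∀ u : (Polynomial Fq ⧸ Ideal.span {p})ˣ, ∃ n : ℕ,
      Ideal.Quotient.mk (Ideal.span {p}) g ^ n = (u : Polynomial Fq ⧸ Ideal.span {p}))
    (hqd : 2 < Fintype.card Fq ∨ 1 < d)
 :
    ∀ ℓ : ℤ, ∃ e : ℕ, e ≤ Fintype.card Fq ^ d - 2 ∧
      ∃ Q : Polynomial (Polynomial Fq), IsUnitIn (Algebra.adjoin (Polynomial Fq) {lam}) (Polynomial.aeval lam Q) ∧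
        (lam / Polynomial.aeval lam (Carlitz g)) ^ ℓ = (lam / Polynomial.aeval lam (Carlitz g)) ^ (e : ℤ) *
          (Polynomial.aeval lam Q / Polynomial.aeval (Polynomial.aeval lam (Carlitz g)) Q) := by
  classical
  have hq2 : 1 < Fintype.card Fq := Fintype.one_lt_card
  have hqd3 : 3 ≤ Fintype.card Fq ^ d := by
    rcases hqd with h | h
    · have h1 : Fintype.card Fq ^ 1 ≤ Fintype.card Fq ^ d := Nat.pow_le_pow_right (by omega) hd1
      rw [pow_one] at h1
      linarith
    · have h2 : 2 ^ d ≤ Fintype.card Fq ^ d := Nat.pow_le_pow_left hq2 d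
      have h3 : 2 ^ 2 ≤ 2 ^ d := Nat.pow_le_pow_right (by omega) h
      norm_num at h3
      linarith
  have hmem : ∀ P : Polynomial (Polynomial Fq),
      Polynomial.aeval lam P ∈ Algebra.adjoin (Polynomial Fq) {lam} := by
    intro P
    rw [Algebra.adjoin_singleton_eq_range_aeval]
    exact ⟨P, rfl⟩
  intro ℓ
  by_cases hα : lam / Polynomial.aeval lam (Carlitz g) = 0
  · rcases eq_or_ne ℓ 0 with rfl | hl
    · refine ⟨0, Nat.zero_le _, 1, ⟨?_, 1, ?_, by rw [map_one, one_mul]⟩, by simp⟩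
      · rw [map_one]; exact one_mem _
      · exact one_mem _
    · refine ⟨1, Nat.le_sub_of_add_le (by linarith : 1 + 2 ≤ Fintype.card Fq ^ d), 1, ⟨?_, 1, ?_, by rw [map_one, one_mul]⟩, ?_⟩
      · rw [map_one]; exact one_mem _
      · exact one_mem _
      · rw [hα, zero_zpow ℓ hl]
        simp
  -- main case
  have hβ0 : Polynomial.aeval lam (Carlitz g) ≠ 0 := by
    intro h; exact hα (by rw [h, div_zero])
  have hlam0 : lam ≠ 0 := by
    intro h; exact hα (by rw [h, zero_div])
  choose D hD using hCdvd
  have hφ1 : Polynomial.aeval lam (Carlitz 1) = lam := by rw [hC1, Polynomial.aeval_X]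
  have hφp : Polynomial.aeval lam (Carlitz p) = 0 := by
    rw [← hΨdef, map_mul, Polynomial.aeval_X, hlam, mul_zero]
  have hφmul : ∀ a b, Polynomial.aeval lam (Carlitz (a*b))
      = Polynomial.aeval (Polynomial.aeval lam (Carlitz b)) (Carlitz a) := by
    intro a b; rw [hCmul, Polynomial.aeval_comp]
  have hφcong : ∀ a b, p ∣ a - b →
      Polynomial.aeval lam (Carlitz a) = Polynomial.aeval lam (Carlitz b) := by
    intro a b hdvd
    obtain ⟨c, hc⟩ := hdvd
    have ha : a = b + c * p := by linear_combination hc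
    rw [ha, hCadd, map_add, hφmul c p, hφp, hD c, map_mul, Polynomial.aeval_X, zero_mul, add_zero]
  obtain ⟨B, hBeq⟩ : ∃ B : ℕ → L, ∀ i, B i = Polynomial.aeval lam (Carlitz (g^i)) :=
    ⟨_, fun i => rfl⟩
  have hB1β : B 1 = Polynomial.aeval lam (Carlitz g) := by rw [hBeq, pow_one]
  obtain ⟨hfer, hinv⟩ := fermat_aux p hpm hpi g hg (by rwa [hpd])
  rw [hpd] at hfer
  choose h hh using hinv
  have hBval : ∀ i, B i * Polynomial.aeval (B i) (D (h i)) = lam := by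
    intro i
    have h1 : Polynomial.aeval lam (Carlitz (h i * g^i)) = Polynomial.aeval lam (Carlitz 1) :=
      hφcong _ _ (by simpa using hh i)
    rw [hφmul, hφ1, ← hBeq i] at h1
    rw [hD (h i), map_mul, Polynomial.aeval_X] at h1
    exact h1
  have hBne : ∀ i, B i ≠ 0 := by
    intro i h0
    apply hlam0; rw [← hBval i, h0, zero_mul]
  have hβB : ∀ i, Polynomial.aeval (Polynomial.aeval lam (Carlitz g)) (Carlitz (g^i)) = B (i+1) := by
    intro i
    rw [hBeq (i+1), pow_succ, hφmul (g^i) g]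
  have hBW : ∀ i, B (i+1) * Polynomial.aeval (B (i+1)) (D (h i))
      = Polynomial.aeval lam (Carlitz g) := by
    intro i
    have hdvd : p ∣ h i * g^(i+1) - g := by
      have h2 := (hh i).mul_right g
      rwa [sub_mul, one_mul, mul_assoc, ← pow_succ] at h2
    have h1 := hφcong _ _ hdvd
    rw [hφmul (h i) (g^(i+1)), ← hBeq (i+1)] at h1
    rw [hD (h i), map_mul, Polynomial.aeval_X] at h1
    exact h1
  have hDg1 : ∀ i, lam * Polynomial.aeval lam (D (g^i)) = B i := by
    intro i
    rw [hBeq i, hD (g^i), map_mul, Polynomial.aeval_X]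
  have hDg2 : ∀ i, Polynomial.aeval lam (Carlitz g) *
      Polynomial.aeval (Polynomial.aeval lam (Carlitz g)) (D (g^i)) = B (i+1) := by
    intro i
    rw [← hβB i, hD (g^i), map_mul, Polynomial.aeval_X]
  have hwlam : ∀ i, Polynomial.aeval lam ((D (h i)).comp (Carlitz (g^i))) = lam / B i := by
    intro i
    rw [Polynomial.aeval_comp, ← hBeq i, eq_div_iff (hBne i), mul_comm]
    exact hBval i
  have hwβ : ∀ i, Polynomial.aeval (Polynomial.aeval lam (Carlitz g)) ((D (h i)).comp (Carlitz (g^i)))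
      = Polynomial.aeval lam (Carlitz g) / B (i+1) := by
    intro i
    rw [Polynomial.aeval_comp, hβB i, eq_div_iff (hBne (i+1)), mul_comm]
    exact hBW i
  have hw'lam : ∀ i, Polynomial.aeval lam (D (g^i)) = B i / lam := by
    intro i
    rw [eq_div_iff hlam0, mul_comm]
    exact hDg1 i
  have hw'β : ∀ i, Polynomial.aeval (Polynomial.aeval lam (Carlitz g)) (D (g^i))
      = B (i+1) / Polynomial.aeval lam (Carlitz g) := by
    intro i
    rw [eq_div_iff hβ0, mul_comm]
    exact hDg2 i
  set M := Fintype.card Fq ^ d with hMdef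
  set Nn := M - 1 with hNdef
  have hNn1 : Nn - 1 + 1 = Nn := by omega
  have hBN : B Nn = lam := (hBeq Nn).trans ((hφcong _ _ hfer).trans hφ1)
  set QN := ∏ i ∈ Finset.range (Nn - 1), (D (h (i+1))).comp (Carlitz (g^(i+1))) with hQNdef
  set QN' := ∏ i ∈ Finset.range (Nn - 1), D (g^(i+1)) with hQN'def
  have hQNlam : Polynomial.aeval lam QN = ∏ i ∈ Finset.range (Nn-1), (lam / B (i+1)) := by
    rw [hQNdef, map_prod]
    exact Finset.prod_congr rfl fun i _ => hwlam (i+1)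
  have hQNβ : Polynomial.aeval (Polynomial.aeval lam (Carlitz g)) QN
      = ∏ i ∈ Finset.range (Nn-1), (Polynomial.aeval lam (Carlitz g) / B (i+2)) := by
    rw [hQNdef, map_prod]
    exact Finset.prod_congr rfl fun i _ => hwβ (i+1)
  have hQN'lam : Polynomial.aeval lam QN' = ∏ i ∈ Finset.range (Nn-1), (B (i+1) / lam) := by
    rw [hQN'def, map_prod]
    exact Finset.prod_congr rfl fun i _ => hw'lam (i+1)
  have hQN'β : Polynomial.aeval (Polynomial.aeval lam (Carlitz g)) QN'
      = ∏ i ∈ Finset.range (Nn-1), (B (i+2) / Polynomial.aeval lam (Carlitz g)) := by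
    rw [hQN'def, map_prod]
    exact Finset.prod_congr rfl fun i _ => hw'β (i+1)
  have htele := prod_tele B lam (Polynomial.aeval lam (Carlitz g)) hB1β hBne hlam0 (Nn - 1)
  rw [hNn1, hBN] at htele
  have htele' := prod_tele' B lam (Polynomial.aeval lam (Carlitz g)) hB1β hBne hlam0 (Nn - 1)
  rw [hNn1, hBN] at htele'
  have hQβne : Polynomial.aeval (Polynomial.aeval lam (Carlitz g)) QN ≠ 0 := by
    rw [hQNβ]
    exact Finset.prod_ne_zero_iff.mpr fun i _ => div_ne_zero hβ0 (hBne _)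
  have hQ'βne : Polynomial.aeval (Polynomial.aeval lam (Carlitz g)) QN' ≠ 0 := by
    rw [hQN'β]
    exact Finset.prod_ne_zero_iff.mpr fun i _ => div_ne_zero (hBne _) hβ0
  have htele2 : (Polynomial.aeval lam (Carlitz g))^Nn * Polynomial.aeval lam QN
      = lam^Nn * Polynomial.aeval (Polynomial.aeval lam (Carlitz g)) QN := by
    rw [hQNlam, hQNβ, htele, ← pow_succ, hNn1]
  have htele2' : lam^Nn * Polynomial.aeval lam QN'
      = (Polynomial.aeval lam (Carlitz g))^Nn * Polynomial.aeval (Polynomial.aeval lam (Carlitz g)) QN' := by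
    rw [hQN'lam, hQN'β, ← htele', ← pow_succ, hNn1]
  have hration : Polynomial.aeval lam QN / Polynomial.aeval (Polynomial.aeval lam (Carlitz g)) QN
      = (lam / Polynomial.aeval lam (Carlitz g))^Nn := by
    rw [div_pow, div_eq_div_iff hQβne (pow_ne_zero _ hβ0)]
    linear_combination htele2
  have hration' : Polynomial.aeval lam QN' / Polynomial.aeval (Polynomial.aeval lam (Carlitz g)) QN'
      = (Polynomial.aeval lam (Carlitz g) / lam)^Nn := by
    rw [div_pow, div_eq_div_iff hQ'βne (pow_ne_zero _ hlam0)]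
    linear_combination htele2'
  have hQQ' : Polynomial.aeval lam QN * Polynomial.aeval lam QN' = 1 := by
    rw [hQNlam, hQN'lam, ← Finset.prod_mul_distrib]
    apply Finset.prod_eq_one
    intro i _
    rw [div_mul_div_comm, mul_comm lam (B (i+1)), div_self (mul_ne_zero (hBne (i+1)) hlam0)]
  -- decomposition of ℓ
  have hNpos : (0:ℤ) < (Nn:ℤ) := by
    have : 0 < Nn := by omega
    exact_mod_cast this
  have hemod : 0 ≤ ℓ % (Nn:ℤ) := Int.emod_nonneg ℓ (ne_of_gt hNpos)
  have hlt : ℓ % (Nn:ℤ) < (Nn:ℤ) := Int.emod_lt_of_pos ℓ hNpos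
  set e := (ℓ % (Nn:ℤ)).toNat with hedef
  have he : (e:ℤ) = ℓ % (Nn:ℤ) := Int.toNat_of_nonneg hemod
  have hebound : e ≤ M - 2 := by omega
  set m := ℓ / (Nn:ℤ) with hmdef
  have hsplit : ℓ = (e:ℤ) + (Nn:ℤ) * m := by
    rw [he, hmdef]
    exact (Int.emod_add_mul_ediv ℓ (Nn:ℤ)).symm
  have hzsplit : (lam / Polynomial.aeval lam (Carlitz g)) ^ ℓ
      = (lam / Polynomial.aeval lam (Carlitz g)) ^ ((e:ℕ):ℤ)
        * (lam / Polynomial.aeval lam (Carlitz g)) ^ ((Nn:ℤ) * m) := by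
    nth_rewrite 1 [hsplit]
    rw [zpow_add₀ hα]
  rcases le_or_gt 0 m with hm | hm
  · set k := m.toNat with hkdef
    have hmk : m = (k:ℤ) := (Int.toNat_of_nonneg hm).symm
    refine ⟨e, hebound, QN ^ k, ⟨hmem _, Polynomial.aeval lam (QN' ^ k), hmem _, ?_⟩, ?_⟩
    · rw [map_pow, map_pow, ← mul_pow, hQQ', one_pow]
    · rw [hzsplit]
      congr 1
      rw [map_pow, map_pow, ← div_pow, hration, ← pow_mul, hmk, ← Nat.cast_mul, zpow_natCast]
  · set k := (-m).toNat with hkdef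
    have hmk : m = -(k:ℤ) := by omega
    refine ⟨e, hebound, QN' ^ k, ⟨hmem _, Polynomial.aeval lam (QN ^ k), hmem _, ?_⟩, ?_⟩
    · rw [map_pow, map_pow, ← mul_pow, mul_comm (Polynomial.aeval lam QN') (Polynomial.aeval lam QN), hQQ', one_pow]
    · rw [hzsplit]
      congr 1
      rw [map_pow, map_pow, ← div_pow, hration', hmk, mul_neg, ← Nat.cast_mul, zpow_neg,
        zpow_natCast, ← inv_pow, inv_div, ← pow_mul]
end

section
/- The automorphism σ_𝔤 generates the cyclic group Gal(𝕂_℘/k), which has order q^d − 1; more precisely, for every integer e with 0 ≤ e ≤ q^d − 2 one has σ_{𝔤^e}(λ_℘) = σ_𝔤^e(λ_℘), and every element of Gal(𝕂_℘/k) equals σ_𝔤^e for some such e. -/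
theorem stmt_13
    (Fq : Type) [Field Fq] [Fintype Fq]
    (L : Type) [Field L] [Algebra (Polynomial Fq) L] [Algebra (RatFunc Fq) L]
    [IsScalarTower (Polynomial Fq) (RatFunc Fq) L] [FiniteDimensional (RatFunc Fq) L]
    (Carlitz : Polynomial Fq → Polynomial (Polynomial Fq))
    (hC1 : Carlitz 1 = Polynomial.X)
    (hCadd : ∀ a b, Carlitz (a + b) = Carlitz a + Carlitz b)
    (hCsmul : ∀ (β : Fq) (a : Polynomial Fq),
      Carlitz (Polynomial.C β * a) = Polynomial.C (Polynomial.C β) * Carlitz a)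
    (hCmul : ∀ a b, Carlitz (a * b) = (Carlitz a).comp (Carlitz b))
    (hCT : Carlitz Polynomial.X
      = Polynomial.C Polynomial.X * Polynomial.X + Polynomial.X ^ Fintype.card Fq)
    (hCdvd : ∀ a, Polynomial.X ∣ Carlitz a)
    (p : Polynomial Fq) (hpm : p.Monic) (hpi : Irreducible p)
    (d : ℕ) (hpd : p.natDegree = d) (hd1 : 1 ≤ d)
    (Ψ : Polynomial (Polynomial Fq)) (hΨdef : Polynomial.X * Ψ = Carlitz p)
    (hΨirr : Irreducible (Ψ.map (algebraMap (Polynomial Fq) (RatFunc Fq))))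
    (lam : L) (hlam : Polynomial.aeval lam Ψ = 0)
    (hgen : IntermediateField.adjoin (RatFunc Fq) {lam} = ⊤)
    (g : Polynomial Fq)
    (hg : ∀ u : (Polynomial Fq ⧸ Ideal.span {p})ˣ, ∃ n : ℕ,
      Ideal.Quotient.mk (Ideal.span {p}) g ^ n = (u : Polynomial Fq ⧸ Ideal.span {p}))
    (σ : Polynomial Fq → (L ≃ₐ[RatFunc Fq] L))
    (hσ : ∀ m : Polynomial Fq, IsCoprime m p → (σ m) lam = Polynomial.aeval lam (Carlitz m)) :
    Nat.card (L ≃ₐ[RatFunc Fq] L) = Fintype.card Fq ^ d - 1 ∧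
    (∀ e : ℕ, e ≤ Fintype.card Fq ^ d - 2 → (σ (g ^ e)) lam = ((σ g) ^ e) lam) ∧
    (∀ τ : L ≃ₐ[RatFunc Fq] L, ∃ e : ℕ, e ≤ Fintype.card Fq ^ d - 2 ∧ τ = (σ g) ^ e) := by
  classical
  have hq2 : 2 ≤ Fintype.card Fq := Fintype.one_lt_card
  have hqd2 : 2 ≤ Fintype.card Fq ^ d :=
    le_trans hq2 (Nat.le_self_pow (by omega) _)
  have hpne : p ≠ 0 := hpm.ne_zero
  -- Carlitz 0 = 0
  have hC0 : Carlitz 0 = 0 := by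
    have h := hCadd 0 0
    rw [add_zero] at h
    exact left_eq_add.mp h
  let Φ : Polynomial Fq →+ Polynomial (Polynomial Fq) :=
    { toFun := Carlitz, map_zero' := hC0, map_add' := hCadd }
  -- facts about Carlitz (X ^ i)
  have hM : ∀ i : ℕ, (Carlitz (Polynomial.X ^ i)).coeff 1 = Polynomial.X ^ i ∧
      (Carlitz (Polynomial.X ^ i)).natDegree ≤ Fintype.card Fq ^ i := by
    intro i
    induction i with
    | zero => simp [hC1]
    | succ i ih =>
      have hstep : Carlitz (Polynomial.X ^ (i + 1))
          = Polynomial.C Polynomial.X * Carlitz (Polynomial.X ^ i)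
            + (Carlitz (Polynomial.X ^ i)) ^ Fintype.card Fq := by
        rw [pow_succ', hCmul, hCT]
        simp [Polynomial.add_comp, Polynomial.mul_comp, Polynomial.C_comp,
          Polynomial.X_comp, Polynomial.pow_comp]
      obtain ⟨c, hc⟩ := hCdvd (Polynomial.X ^ i)
      rw [hstep]
      constructor
      · have h2 : ((Carlitz (Polynomial.X ^ i)) ^ Fintype.card Fq).coeff 1 = 0 := by
          rw [hc, mul_pow,
            mul_comm ((Polynomial.X : Polynomial (Polynomial Fq)) ^ Fintype.card Fq)
              (c ^ Fintype.card Fq),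
            Polynomial.coeff_mul_X_pow']
          simp [show ¬ Fintype.card Fq ≤ 1 by omega]
        rw [Polynomial.coeff_add, Polynomial.coeff_C_mul, ih.1, h2, add_zero]
        exact (pow_succ' _ _).symm
      · refine le_trans (Polynomial.natDegree_add_le _ _) (max_le ?_ ?_)
        · exact le_trans (Polynomial.natDegree_C_mul_le _ _)
            (le_trans ih.2 (Nat.pow_le_pow_right (by omega) (Nat.le_succ i)))
        · refine le_trans Polynomial.natDegree_pow_le ?_
          calc Fintype.card Fq * (Carlitz (Polynomial.X ^ i)).natDegree
              ≤ Fintype.card Fq * Fintype.card Fq ^ i := Nat.mul_le_mul_left _ ih.2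
            _ = Fintype.card Fq ^ (i + 1) := (pow_succ' _ _).symm
  -- decomposition facts about Carlitz a
  have hdec : ∀ a : Polynomial Fq, (Carlitz a).coeff 1 = a ∧
      (Carlitz a).natDegree ≤ Fintype.card Fq ^ a.natDegree := by
    intro a
    have ha : a = ∑ i ∈ Finset.range (a.natDegree + 1),
        Polynomial.C (a.coeff i) * Polynomial.X ^ i := by
      conv_lhs => rw [Polynomial.as_sum_range' a (a.natDegree + 1) (Nat.lt_succ_self _)]
      simp [Polynomial.C_mul_X_pow_eq_monomial]
    have hCa : Carlitz a = ∑ i ∈ Finset.range (a.natDegree + 1),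
        Polynomial.C (Polynomial.C (a.coeff i)) * Carlitz (Polynomial.X ^ i) := by
      calc Carlitz a = Φ (∑ i ∈ Finset.range (a.natDegree + 1),
          Polynomial.C (a.coeff i) * Polynomial.X ^ i) := by rw [← ha]; rfl
        _ = ∑ i ∈ Finset.range (a.natDegree + 1),
            Carlitz (Polynomial.C (a.coeff i) * Polynomial.X ^ i) := map_sum Φ _ _
        _ = _ := Finset.sum_congr rfl fun i _ => hCsmul _ _
    constructor
    · rw [hCa, Polynomial.finset_sum_coeff]
      calc (∑ i ∈ Finset.range (a.natDegree + 1),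
          (Polynomial.C (Polynomial.C (a.coeff i)) * Carlitz (Polynomial.X ^ i)).coeff 1)
          = ∑ i ∈ Finset.range (a.natDegree + 1),
            Polynomial.C (a.coeff i) * Polynomial.X ^ i := by
            refine Finset.sum_congr rfl fun i _ => ?_
            rw [Polynomial.coeff_C_mul, (hM i).1]
        _ = a := ha.symm
    · rw [hCa]
      refine Polynomial.natDegree_sum_le_of_forall_le _ _ fun i hi => ?_
      refine le_trans (Polynomial.natDegree_C_mul_le _ _) (le_trans (hM i).2 ?_)
      exact Nat.pow_le_pow_right (by omega) (Nat.lt_succ_iff.mp (Finset.mem_range.mp hi))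
  -- constant coefficient of Ψ
  have hΨc0 : Ψ.coeff 0 = p := by
    have h1 : (Polynomial.X * Ψ).coeff (0 + 1) = Ψ.coeff 0 := Polynomial.coeff_X_mul Ψ 0
    rw [hΨdef] at h1
    rw [← h1]
    exact (hdec p).1
  have hΨne : Ψ ≠ 0 := by
    intro h
    rw [h] at hΨc0
    exact hpne (by simpa using hΨc0.symm)
  have hΨdeg : Ψ.natDegree ≤ Fintype.card Fq ^ d - 1 := by
    have h1 : (Polynomial.X * Ψ).natDegree = 1 + Ψ.natDegree := by
      rw [Polynomial.natDegree_mul Polynomial.X_ne_zero hΨne, Polynomial.natDegree_X]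
    have h2 : (Carlitz p).natDegree ≤ Fintype.card Fq ^ d := by
      have h3 := (hdec p).2
      rwa [hpd] at h3
    rw [hΨdef] at h1
    omega
  have hinjQ : Function.Injective (algebraMap (Polynomial Fq) L) := by
    rw [IsScalarTower.algebraMap_eq (Polynomial Fq) (RatFunc Fq) L]
    exact (algebraMap (RatFunc Fq) L).injective.comp (RatFunc.algebraMap_injective Fq)
  have hlamne : lam ≠ 0 := by
    intro h
    have hl := hlam
    rw [h, Polynomial.aeval_def, Polynomial.eval₂_at_zero, hΨc0] at hl
    exact hpne (hinjQ (by rw [map_zero]; exact hl))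
  have hE : ∀ (a b : Polynomial Fq) (x : L),
      Polynomial.aeval x (Carlitz (a * b))
        = Polynomial.aeval (Polynomial.aeval x (Carlitz b)) (Carlitz a) := by
    intro a b x
    rw [hCmul, Polynomial.aeval_comp]
  have haeval0 : ∀ a : Polynomial Fq, Polynomial.aeval (0 : L) (Carlitz a) = 0 := by
    intro a
    obtain ⟨c, hc⟩ := hCdvd a
    rw [hc, map_mul, Polynomial.aeval_X, zero_mul]
  have hCp0 : Polynomial.aeval lam (Carlitz p) = 0 := by
    rw [← hΨdef, map_mul, Polynomial.aeval_X, hlam, mul_zero]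
  have htor : ∀ a : Polynomial Fq, ¬ p ∣ a → Polynomial.aeval lam (Carlitz a) ≠ 0 := by
    intro a hnd h0
    obtain ⟨u, v, huv⟩ := hpi.coprime_iff_not_dvd.mpr hnd
    have h1 : Polynomial.aeval lam (Carlitz (u * p + v * a)) = 0 := by
      rw [hCadd, map_add, hE u p lam, hE v a lam, hCp0, h0, haeval0, haeval0, add_zero]
    rw [huv, hC1, Polynomial.aeval_X] at h1
    exact hlamne h1
  have hcomm : ∀ (τ : L ≃ₐ[RatFunc Fq] L) (x : L) (f : Polynomial (Polynomial Fq)),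
      τ (Polynomial.aeval x f) = Polynomial.aeval (τ x) f := by
    intro τ x f
    exact (Polynomial.aeval_algHom_apply
      ((AlgEquiv.restrictScalars (Polynomial Fq) τ).toAlgHom) x f).symm
  have hP : ∀ (m : Polynomial Fq), IsCoprime m p → ∀ e : ℕ,
      ((σ m) ^ e) lam = Polynomial.aeval lam (Carlitz (m ^ e)) := by
    intro m hm e
    induction e with
    | zero =>
      rw [pow_zero, pow_zero, hC1, Polynomial.aeval_X]
      rfl
    | succ e ih =>
      have h1 : ((σ m) ^ (e + 1)) lam = ((σ m) ^ e) ((σ m) lam) := by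
        rw [pow_succ]
        rfl
      rw [h1, hσ m hm, hcomm, ih, ← hE, ← pow_succ']
  -- quotient ring facts
  letI : (Ideal.span {p} : Ideal (Polynomial Fq)).IsMaximal :=
    PrincipalIdealRing.isMaximal_of_irreducible hpi
  letI : Field (Polynomial Fq ⧸ Ideal.span {p}) := Ideal.Quotient.field _
  have hQfin : Finite (Polynomial Fq ⧸ Ideal.span {p}) := by
    exact Finite.of_equiv _ (AdjoinRoot.powerBasis' hpm).basis.equivFun.toEquiv.symm
  haveI := hQfin
  have hQcard : Nat.card (Polynomial Fq ⧸ Ideal.span {p}) = Fintype.card Fq ^ d := by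
    have hdim : (AdjoinRoot.powerBasis' hpm).dim = d := hpd
    calc Nat.card (Polynomial Fq ⧸ Ideal.span {p})
        = Nat.card (Fin (AdjoinRoot.powerBasis' hpm).dim → Fq) :=
          Nat.card_congr (AdjoinRoot.powerBasis' hpm).basis.equivFun.toEquiv
      _ = Fintype.card Fq ^ d := by
          rw [Nat.card_fun]
          simp [Nat.card_eq_fintype_card, hdim, hpd]
  have hQu : Nat.card (Polynomial Fq ⧸ Ideal.span {p})ˣ = Fintype.card Fq ^ d - 1 := by
    rw [Nat.card_units, hQcard]
  have hdvd_case : p ∣ g → Fintype.card Fq ^ d - 1 = 1 := by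
    intro hpg
    have hg0 : Ideal.Quotient.mk (Ideal.span {p}) g = 0 :=
      Ideal.Quotient.eq_zero_iff_mem.mpr (Ideal.mem_span_singleton.mpr hpg)
    have hall : ∀ u : (Polynomial Fq ⧸ Ideal.span {p})ˣ, u = 1 := by
      intro u
      obtain ⟨n, hn⟩ := hg u
      rcases n with _ | n
      · exact Units.ext (by simpa using hn.symm)
      · rw [hg0, zero_pow (Nat.succ_ne_zero n)] at hn
        exact absurd hn.symm u.ne_zero
    rw [← hQu, Nat.card_eq_one_iff_unique]
    exact ⟨⟨fun a b => (hall a).trans (hall b).symm⟩, ⟨1⟩⟩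
  have hgcop : 2 ≤ Fintype.card Fq ^ d - 1 → IsCoprime g p := by
    intro hN2
    by_contra h
    have hpg : p ∣ g := hpi.dvd_iff_not_isCoprime.mpr (fun hc => h (isCoprime_comm.mp hc))
    have := hdvd_case hpg
    omega
  have hgu : 2 ≤ Fintype.card Fq ^ d - 1 →
      ∃ gu : (Polynomial Fq ⧸ Ideal.span {p})ˣ,
        (gu : Polynomial Fq ⧸ Ideal.span {p}) = Ideal.Quotient.mk (Ideal.span {p}) g ∧
        orderOf gu = Fintype.card Fq ^ d - 1 := by
    intro hN2
    have hnt : Nontrivial (Polynomial Fq ⧸ Ideal.span {p})ˣ := by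
      rw [← Finite.one_lt_card_iff_nontrivial, hQu]
      omega
    obtain ⟨u, hu1⟩ := exists_ne (1 : (Polynomial Fq ⧸ Ideal.span {p})ˣ)
    obtain ⟨n, hn⟩ := hg u
    have hn0 : n ≠ 0 := by
      rintro rfl
      exact hu1 (Units.ext (by simpa using hn.symm))
    have hgunit : IsUnit (Ideal.Quotient.mk (Ideal.span {p}) g) := by
      refine isUnit_of_dvd_unit (dvd_pow_self _ hn0) ?_
      rw [hn]
      exact u.isUnit
    refine ⟨hgunit.unit, hgunit.unit_spec, ?_⟩
    have hall : ∀ x : (Polynomial Fq ⧸ Ideal.span {p})ˣ,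
        x ∈ Subgroup.zpowers hgunit.unit := by
      intro x
      obtain ⟨m, hm⟩ := hg x
      refine Subgroup.mem_zpowers_iff.mpr ⟨(m : ℤ), ?_⟩
      rw [zpow_natCast]
      exact Units.ext (by rw [Units.val_pow_eq_pow_val, hgunit.unit_spec, hm])
    rw [orderOf_eq_card_of_forall_mem_zpowers hall, hQu]
  -- distinctness of powers of σ g at lam
  have hNcard : ∀ e f : ℕ, e < Fintype.card Fq ^ d - 1 → f < Fintype.card Fq ^ d - 1 →
      ((σ g) ^ e) lam = ((σ g) ^ f) lam → e = f := by
    intro e f he hf heq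
    rcases Nat.lt_or_ge (Fintype.card Fq ^ d - 1) 2 with hN2 | hN2
    · omega
    obtain ⟨gu, hguval, hguord⟩ := hgu hN2
    have hcop := hgcop hN2
    have h1 : Polynomial.aeval lam (Carlitz (g ^ e))
        = Polynomial.aeval lam (Carlitz (g ^ f)) := by
      rw [← hP g hcop e, ← hP g hcop f, heq]
    have h2 : p ∣ g ^ e - g ^ f := by
      by_contra hnd
      have h3 : Polynomial.aeval lam (Carlitz (g ^ e - g ^ f)) = 0 := by
        have hsub : Carlitz (g ^ e - g ^ f) = Carlitz (g ^ e) - Carlitz (g ^ f) :=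
          map_sub Φ _ _
        rw [hsub, map_sub, h1, sub_self]
      exact htor _ hnd h3
    have h3 : gu ^ e = gu ^ f := by
      have h4 : Ideal.Quotient.mk (Ideal.span {p}) (g ^ e)
          = Ideal.Quotient.mk (Ideal.span {p}) (g ^ f) :=
        Ideal.Quotient.eq.mpr (Ideal.mem_span_singleton.mpr h2)
      apply Units.ext
      rw [Units.val_pow_eq_pow_val, Units.val_pow_eq_pow_val, hguval, ← map_pow, ← map_pow]
      exact h4
    have key : ∀ a b : ℕ, b ≤ a → a < Fintype.card Fq ^ d - 1 → gu ^ a = gu ^ b → a = b := by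
      intro a b hba ha h
      have h4 : gu ^ (a - b) = 1 := by
        have h5 : gu ^ (a - b) * gu ^ b = 1 * gu ^ b := by
          rw [← pow_add, Nat.sub_add_cancel hba, h, one_mul]
        exact mul_right_cancel h5
      have h5 := orderOf_dvd_of_pow_eq_one h4
      rw [hguord] at h5
      rcases Nat.eq_zero_or_pos (a - b) with h6 | h6
      · omega
      · have := Nat.le_of_dvd h6 h5
        omega
    rcases Nat.le_total f e with h | h
    · exact key e f h he h3
    · exact (key f e h hf h3.symm).symm
  -- extension of equality on the generator
  have hadj : Algebra.adjoin (RatFunc Fq) {lam} = ⊤ := by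
    have hint : IsIntegral (RatFunc Fq) lam := IsIntegral.of_finite _ _
    have h := IntermediateField.adjoin_simple_toSubalgebra_of_isAlgebraic hint.isAlgebraic
    rw [hgen, IntermediateField.top_toSubalgebra] at h
    exact h.symm
  have hext : ∀ τ τ' : L ≃ₐ[RatFunc Fq] L, τ lam = τ' lam → τ = τ' := by
    intro τ τ' h
    have hle : (⊤ : Subalgebra (RatFunc Fq) L)
        ≤ AlgHom.equalizer τ.toAlgHom τ'.toAlgHom := by
      rw [← hadj]
      exact Algebra.adjoin_le (Set.singleton_subset_iff.mpr h)
    exact AlgEquiv.ext fun x => hle Algebra.mem_top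
  -- roots of the mapped cyclotomic polynomial
  have hFne : Ψ.map (algebraMap (Polynomial Fq) L) ≠ 0 := fun h =>
    hΨne (Polynomial.map_injective _ hinjQ (by rw [h, Polynomial.map_zero]))
  have hFdeg : (Ψ.map (algebraMap (Polynomial Fq) L)).natDegree ≤ Fintype.card Fq ^ d - 1 :=
    le_trans Polynomial.natDegree_map_le hΨdeg
  have hτlam : ∀ τ : L ≃ₐ[RatFunc Fq] L,
      τ lam ∈ (Ψ.map (algebraMap (Polynomial Fq) L)).roots.toFinset := by
    intro τ
    refine Multiset.mem_toFinset.mpr ((Polynomial.mem_roots hFne).mpr ?_)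
    show Polynomial.eval (τ lam) (Ψ.map (algebraMap (Polynomial Fq) L)) = 0
    rw [Polynomial.eval_map, ← Polynomial.aeval_def, ← hcomm, hlam, map_zero]
  have hScard : ((Finset.range (Fintype.card Fq ^ d - 1)).image
      (fun e => ((σ g) ^ e) lam)).card = Fintype.card Fq ^ d - 1 := by
    rw [Finset.card_image_of_injOn, Finset.card_range]
    intro e he f hf hef
    exact hNcard e f (Finset.mem_range.mp he) (Finset.mem_range.mp hf) hef
  have hSsub : (Finset.range (Fintype.card Fq ^ d - 1)).image (fun e => ((σ g) ^ e) lam)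
      ⊆ (Ψ.map (algebraMap (Polynomial Fq) L)).roots.toFinset := by
    intro x hx
    obtain ⟨e, _, rfl⟩ := Finset.mem_image.mp hx
    exact hτlam _
  have hSeq : (Ψ.map (algebraMap (Polynomial Fq) L)).roots.toFinset
      = (Finset.range (Fintype.card Fq ^ d - 1)).image (fun e => ((σ g) ^ e) lam) := by
    refine (Finset.eq_of_subset_of_card_le hSsub ?_).symm
    rw [hScard]
    exact le_trans (le_trans (Multiset.toFinset_card_le _)
      (Polynomial.card_roots' _)) hFdeg
  have hsurj : ∀ τ : L ≃ₐ[RatFunc Fq] L,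
      ∃ e : ℕ, e < Fintype.card Fq ^ d - 1 ∧ τ = (σ g) ^ e := by
    intro τ
    have h := hτlam τ
    rw [hSeq] at h
    obtain ⟨e, he, heq⟩ := Finset.mem_image.mp h
    exact ⟨e, Finset.mem_range.mp he, hext _ _ heq.symm⟩
  refine ⟨?_, ?_, ?_⟩
  · have hbij : Function.Bijective
        (fun e : Fin (Fintype.card Fq ^ d - 1) => (σ g) ^ (e : ℕ)) := by
      constructor
      · intro e f hef
        exact Fin.ext (hNcard e f e.isLt f.isLt
          (congrArg (fun τ : L ≃ₐ[RatFunc Fq] L => τ lam) hef))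
      · intro τ
        obtain ⟨e, he, rfl⟩ := hsurj τ
        exact ⟨⟨e, he⟩, rfl⟩
    rw [← Nat.card_congr (Equiv.ofBijective _ hbij), Nat.card_eq_fintype_card,
      Fintype.card_fin]
  · intro e he
    by_cases hcop : IsCoprime g p
    · rw [hσ _ (hcop.pow_left)]
      exact (hP g hcop e).symm
    · have hpg : p ∣ g := hpi.dvd_iff_not_isCoprime.mpr (fun hc => hcop (isCoprime_comm.mp hc))
      have h1 := hdvd_case hpg
      have he0 : e = 0 := by omega
      subst he0
      rw [pow_zero, pow_zero, hσ 1 isCoprime_one_left, hC1, Polynomial.aeval_X]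
      rfl
  · intro τ
    obtain ⟨e, he, hτ⟩ := hsurj τ
    exact ⟨e, by omega, hτ⟩
end
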